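/- Let K be a field, let μ ≥ 1, and let q ∈ K^× satisfy q^m ≠ 1 for all 1 ≤ m ≤ μ (q is not a root of unity of order ≤ μ). Let C = {f ∈ K(x) : φ_q(f) = f} be the fixed field of φ_q acting on K(x). Then for all u_0, …, u_{μ−1} ∈ K(x), the dimension over C of the C-linear span of u_0, …, u_{μ−1} equals the rank over K(x) of the μ×μ Casorati matrix whose (j,i) entry is φ_q^j(u_i), 0 ≤ i, j ≤ μ−1. -/

import Mathlib

noncomputable section

variable {K : Type*} [Field K]

/-- Substitution `x ↦ qx` on polynomials, as an algebra homomorphism. -/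
def polySubst (q : K) : Polynomial K →ₐ[K] Polynomial K :=
  Polynomial.aeval (Polynomial.C q * Polynomial.X)

theorem polySubst_leftInverse (q : K) (hq : q ≠ 0) (P : Polynomial K) :
    polySubst q⁻¹ (polySubst q P) = P := by
  have h1 : (polySubst (K := K) q⁻¹) (Polynomial.C q * Polynomial.X) = Polynomial.X := by
    simp only [polySubst, map_mul, Polynomial.aeval_C, Polynomial.aeval_X,
      Polynomial.algebraMap_eq]
    rw [← mul_assoc, ← Polynomial.C_mul, mul_inv_cancel₀ hq, Polynomial.C_1, one_mul]
  calc polySubst q⁻¹ (polySubst q P)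
      = Polynomial.aeval ((polySubst q⁻¹) (Polynomial.C q * Polynomial.X)) P :=
        (Polynomial.aeval_algHom_apply _ _ _).symm
    _ = P := by rw [h1]; exact Polynomial.aeval_X_left_apply P

theorem polySubst_injective (q : K) (hq : q ≠ 0) : Function.Injective (polySubst q) :=
  Function.LeftInverse.injective (g := polySubst q⁻¹) (polySubst_leftInverse q hq)

/-- The automorphism `φ_q : f(x) ↦ f(qx)` of the field `K(x)` of rational functions,
as a ring homomorphism (for `q ≠ 0`). -/
def substField (q : K) (hq : q ≠ 0) : RatFunc K →+* RatFunc K :=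
  IsFractionRing.lift (g := (algebraMap (Polynomial K) (RatFunc K)).comp (polySubst q).toRingHom)
    ((IsFractionRing.injective (Polynomial K) (RatFunc K)).comp (polySubst_injective q hq))

/-- The subfield of elements fixed by a ring endomorphism of `K(x)`;
for `σ = φ_q` this is the field of constants `C`. -/
def fixedSubfield (σ : RatFunc K →+* RatFunc K) : Subfield (RatFunc K) where
  carrier := {f | σ f = f}
  mul_mem' := by
    intro a b ha hb
    simp only [Set.mem_setOf_eq, map_mul] at *
    rw [ha, hb]
  one_mem' := map_one σ
  add_mem' := by
    intro a b ha hb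
    simp only [Set.mem_setOf_eq, map_add] at *
    rw [ha, hb]
  zero_mem' := map_zero σ
  neg_mem' := by
    intro a ha
    simp only [Set.mem_setOf_eq, map_neg] at *
    rw [ha]
  inv_mem' := by
    intro a ha
    simp only [Set.mem_setOf_eq, map_inv₀] at *
    rw [ha]

section Casorati

variable {L : Type*} [Field L]

/-- `σ` as a linear map over a subfield it fixes pointwise. -/
def sigmaLin (σ : L →+* L) (C : Subfield L) (hC : ∀ x : L, x ∈ C → σ x = x) : L →ₗ[C] L where
  toFun := σ
  map_add' := map_add σ
  map_smul' := fun c x => by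
    show σ ((c : L) * x) = (c : L) * σ x
    rw [map_mul, hC _ c.2]

lemma casorati_li (σ : L →+* L) (C : Subfield L) (hC : ∀ x : L, x ∈ C ↔ σ x = x) :
    ∀ (n μ : ℕ), n ≤ μ → ∀ (ι : Type) (_ : Fintype ι), Fintype.card ι = n →
    ∀ w : ι → L, LinearIndependent C w →
    LinearIndependent L (fun i : ι => fun j : Fin μ => σ^[(j : ℕ)] (w i)) := by
  intro n
  induction n with
  | zero =>
    intro μ _ ι _ hcard w _
    have : IsEmpty ι := Fintype.card_eq_zero_iff.mp hcard
    exact linearIndependent_empty_type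
  | succ n IH =>
    intro μ hμ ι _ hcard w hw
    classical
    rw [Fintype.linearIndependent_iff]
    intro g hg
    by_contra hg0
    push_neg at hg0
    obtain ⟨i0, hi0⟩ := hg0
    set f : ι → L := fun i => (g i0)⁻¹ * g i with hf
    have hf0 : f i0 = 1 := inv_mul_cancel₀ hi0
    have hrow : ∀ j : ℕ, j < μ → ∑ i, f i * σ^[j] (w i) = 0 := by
      intro j hj
      have h1 : (∑ i, g i • (fun j : Fin μ => σ^[(j : ℕ)] (w i))) ⟨j, hj⟩ = 0 := by
        rw [hg]; rfl
      simp only [Finset.sum_apply, Pi.smul_apply, smul_eq_mul] at h1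
      calc ∑ i, f i * σ^[j] (w i) = (g i0)⁻¹ * ∑ i, g i * σ^[j] (w i) := by
            rw [Finset.mul_sum]
            exact Finset.sum_congr rfl fun i _ => by rw [hf]; ring
        _ = 0 := by rw [h1, mul_zero]
    have hrowσ : ∀ j : ℕ, j < μ → ∑ i, σ (f i) * σ^[j + 1] (w i) = 0 := by
      intro j hj
      have h2 := congrArg σ (hrow j hj)
      rw [map_sum, map_zero] at h2
      simpa only [map_mul, ← Function.iterate_succ_apply'] using h2
    have hw' : LinearIndependent C (fun i' : {i : ι // i ≠ i0} => σ (w i')) := by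
      have h1 : LinearIndependent C (w ∘ (Subtype.val : {i : ι // i ≠ i0} → ι)) :=
        hw.comp Subtype.val Subtype.val_injective
      have h2 := h1.map' (sigmaLin σ C (fun x hx => (hC x).mp hx))
        (LinearMap.ker_eq_bot.mpr σ.injective)
      exact h2
    have hcard' : Fintype.card {i : ι // i ≠ i0} = n := by
      have h := Fintype.card_subtype_compl (fun i : ι => i = i0)
      simp only [Fintype.card_subtype_eq] at h
      simpa [hcard] using h
    have key := IH (μ - 1) (by omega) {i : ι // i ≠ i0} inferInstance hcard'
      (fun i' => σ (w i')) hw'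
    rw [Fintype.linearIndependent_iff] at key
    have hvan := key (fun i' => f i' - σ (f i')) ?_
    · have hfix : ∀ i, σ (f i) = f i := by
        intro i
        by_cases h : i = i0
        · rw [h, hf0, map_one]
        · have h1 : f i - σ (f i) = 0 := hvan ⟨i, h⟩
          exact (sub_eq_zero.mp h1).symm
      set c : ι → C := fun i => ⟨f i, (hC _).mpr (hfix i)⟩ with hc
      have hrel : ∑ i, c i • w i = 0 := by
        have h0 := hrow 0 (by omega)
        simp only [Function.iterate_zero_apply] at h0
        exact h0
      have hci0 := (Fintype.linearIndependent_iff.mp hw) c hrel i0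
      have h1 : f i0 = 0 := congrArg Subtype.val hci0
      rw [hf0] at h1
      exact one_ne_zero h1
    · funext j
      simp only [Finset.sum_apply, Pi.smul_apply, smul_eq_mul, Pi.zero_apply,
        ← Function.iterate_succ_apply]
      have hj1 : (j : ℕ) + 1 < μ := by omega
      set F : ι → L := fun i => (f i - σ (f i)) * σ^[(j : ℕ) + 1] (w i) with hF
      have e1 : ∑ i' : {i : ι // i ≠ i0}, F i' = ∑ i ∈ ({i0}ᶜ : Finset ι), F i :=
        (Finset.sum_subtype _ (by simp) F).symm
      have e2 : ∑ i ∈ ({i0}ᶜ : Finset ι), F i + ∑ i ∈ ({i0} : Finset ι), F i = ∑ i, F i :=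
        Finset.sum_compl_add_sum _ _
      have e3 : ∑ i ∈ ({i0} : Finset ι), F i = 0 := by
        rw [Finset.sum_singleton, hF]
        simp [hf0]
      have e4 : ∑ i, F i = 0 := by
        rw [hF]
        have hsplit : ∀ i, (f i - σ (f i)) * σ^[(j : ℕ) + 1] (w i)
            = f i * σ^[(j : ℕ) + 1] (w i) - σ (f i) * σ^[(j : ℕ) + 1] (w i) := fun i => by ring
        simp only [hsplit]
        rw [Finset.sum_sub_distrib, hrow _ hj1, hrowσ _ (by omega), sub_zero]
      rw [e1]
      have := e2
      rw [e3, add_zero] at this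
      rw [this, e4]

set_option synthInstance.maxHeartbeats 1000000 in
/-- The general Casorati rank theorem. -/
lemma casorati_rank (σ : L →+* L) (C : Subfield L) (hC : ∀ x : L, x ∈ C ↔ σ x = x)
    (μ : ℕ) (u : Fin μ → L) :
    Module.finrank C (Submodule.span C (Set.range u)) =
      (Matrix.of fun j i : Fin μ => σ^[(j : ℕ)] (u i)).rank := by
  classical
  set V := Submodule.span C (Set.range u) with hV
  have hfin : FiniteDimensional C V := FiniteDimensional.span_of_finite C (Set.finite_range u)
  set d := Module.finrank C V with hd
  have hdμ : d ≤ μ := by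
    have h := finrank_range_le_card (R := C) u
    rw [Set.finrank] at h
    simpa using h
  let b : Module.Basis (Fin d) C V := Module.finBasis C V
  set w : Fin d → L := fun k => ((b k : V) : L) with hw_def
  have hw : LinearIndependent C w := by
    have := b.linearIndependent.map' V.subtype (Submodule.ker_subtype V)
    exact this
  have hWli : LinearIndependent L (fun k : Fin d => fun j : Fin μ => σ^[(j : ℕ)] (w k)) :=
    casorati_li σ C hC d μ hdμ (Fin d) inferInstance (Fintype.card_fin d) w hw
  set M : Matrix (Fin μ) (Fin μ) L := Matrix.of (fun j i : Fin μ => σ^[(j : ℕ)] (u i)) with hM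
  set W : Fin d → (Fin μ → L) := fun k => fun j : Fin μ => σ^[(j : ℕ)] (w k) with hW
  have hiterC : ∀ (c : L), c ∈ C → ∀ j : ℕ, σ^[j] c = c := fun c h j =>
    Function.iterate_fixed ((hC c).mp h) j
  have hitermul : ∀ (j : ℕ) (a b : L), σ^[j] (a * b) = σ^[j] a * σ^[j] b := by
    intro j a b
    rw [← RingHom.coe_pow]
    exact map_mul (σ ^ j) a b
  have hitersum : ∀ (j : ℕ) (ι : Type) (s : Finset ι) (F : ι → L),
      σ^[j] (∑ i ∈ s, F i) = ∑ i ∈ s, σ^[j] (F i) := by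
    intro j ι s F
    rw [← RingHom.coe_pow]
    exact map_sum (σ ^ j) F s
  -- span of columns = span of W
  have hspan : Submodule.span L (Set.range M.transpose) = Submodule.span L (Set.range W) := by
    apply le_antisymm
    · rw [Submodule.span_le]
      rintro _ ⟨i, rfl⟩
      have hui : u i ∈ V := Submodule.subset_span ⟨i, rfl⟩
      obtain ⟨c, hcrep⟩ : ∃ c : Fin d → C, ∑ k, c k • w k = u i := by
        have hx := Module.Basis.sum_repr b ⟨u i, hui⟩
        refine ⟨fun k => b.repr ⟨u i, hui⟩ k, ?_⟩
        have h3 : ∑ k, ((b.repr ⟨u i, hui⟩) k) • w k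
            = ((∑ k, ((b.repr ⟨u i, hui⟩) k) • b k : V) : L) := by
          simp only [AddSubmonoidClass.coe_finset_sum, SetLike.val_smul]
          rfl
        rw [h3, hx]
      have : M.transpose i = ∑ k, ((c k : L)) • W k := by
        funext j
        simp only [Matrix.transpose_apply, hM, Matrix.of_apply, Finset.sum_apply,
          Pi.smul_apply, smul_eq_mul, hW]
        rw [← hcrep, hitersum]
        refine Finset.sum_congr rfl fun k _ => ?_
        have : ((c k • w k : L)) = (c k : L) * w k := rfl
        rw [this, hitermul, hiterC _ (c k).2]
      rw [this]
      exact Submodule.sum_mem _ fun k _ =>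
        Submodule.smul_mem _ _ (Submodule.subset_span ⟨k, rfl⟩)
    · rw [Submodule.span_le]
      rintro _ ⟨k, rfl⟩
      have hwk : w k ∈ V := (b k).2
      rw [hV] at hwk
      obtain ⟨c, hcrep⟩ := (Submodule.mem_span_range_iff_exists_fun C).mp hwk
      have : W k = ∑ i, ((c i : L)) • M.transpose i := by
        funext j
        simp only [hW, Matrix.transpose_apply, hM, Matrix.of_apply, Finset.sum_apply,
          Pi.smul_apply, smul_eq_mul]
        rw [← hcrep, hitersum]
        refine Finset.sum_congr rfl fun i _ => ?_
        have : ((c i • u i : L)) = (c i : L) * u i := rfl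
        rw [this, hitermul, hiterC _ (c i).2]
      rw [this]
      exact Submodule.sum_mem _ fun i _ =>
        Submodule.smul_mem _ _ (Submodule.subset_span ⟨i, rfl⟩)
  rw [Matrix.rank_eq_finrank_span_cols, Matrix.col_def, hspan, finrank_span_eq_card hWli, Fintype.card_fin]

end Casorati

set_option synthInstance.maxHeartbeats 1000000 in
/-- The q-analogue of the Wronskian lemma: the dimension over the field of constants `C`
of the `C`-span of `u_0, …, u_{μ-1}` equals the rank of the Casorati matrix. -/
theorem q_wronskian_lemma (μ : ℕ) (hμ : 1 ≤ μ) (q : K) (hq0 : q ≠ 0)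
    (hqru : ∀ m : ℕ, 1 ≤ m → m ≤ μ → q ^ m ≠ 1)
    (u : Fin μ → RatFunc K) :
    Module.finrank (fixedSubfield (substField q hq0))
        (Submodule.span (fixedSubfield (substField q hq0)) (Set.range u)) =
      (Matrix.of fun j i : Fin μ => (fun f => substField q hq0 f)^[(j : ℕ)] (u i)).rank :=
  casorati_rank (substField q hq0) (fixedSubfield (substField q hq0)) (fun _ => Iff.rfl) μ u
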